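/- Let T_{k-1} and T_k be the self-adjoint operators P ↦ pr_{S_{k-1}}(σP) on S_{k-1} and P ↦ pr_{S_k}(σP) on S_k respectively, where S_j is the space of symmetric polynomials of degree ≤ j with the inner product from a positive measure μ on [0,1]^m. Then the largest eigenvalue λ_{k-1} of T_{k-1} is strictly less than the largest eigenvalue λ_k of T_k. -/

import Mathlib

set_option maxHeartbeats 1000000

open RealInnerProductSpace

/-- the largest eigenvalue `λ_{k-1}` of `T_{k-1} = pr_{S_{k-1}}(σ·−)` is strictly
less than the largest eigenvalue `λ_k` of `T_k = pr_{S_k}(σ·−)`. Here `V` models `S_{k-1}` and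
`W` models `S_k`, subspaces of an ambient inner product space `E` of functions; `S` is
multiplication by `σ`, symmetric for the inner product, with `0 < [σ f, f]` for nonzero
`f ∈ W` (positivity of the measure and of `σ`); `σ·S_{k-1} ⊆ S_k` (`hSV`), and multiplication
by `σ` strictly raises degree: `σ v ∉ S_{k-1}` for nonzero `v ∈ S_{k-1}` (`hdeg`). -/
theorem stmt6 {E : Type*} [NormedAddCommGroup E] [InnerProductSpace ℝ E]
    (V W : Submodule ℝ E) (hVW : V ≤ W) (hV : V ≠ ⊥)
    [FiniteDimensional ℝ V] [FiniteDimensional ℝ W]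
    [Submodule.HasOrthogonalProjection V] [Submodule.HasOrthogonalProjection W]
    (S : E →ₗ[ℝ] E)
    (hsym : ∀ f g : E, ⟪S f, g⟫ = ⟪f, S g⟫)
    (hpos : ∀ f : E, f ∈ W → f ≠ 0 → 0 < ⟪S f, f⟫)
    (hSV : ∀ v ∈ V, S v ∈ W)
    (hdeg : ∀ v ∈ V, v ≠ 0 → S v ∉ V)
    (T1 : V →ₗ[ℝ] V)
    (hT1 : T1 = (Submodule.orthogonalProjectionOnto V).toLinearMap.comp (S.comp V.subtype))
    (T2 : W →ₗ[ℝ] W)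
    (hT2 : T2 = (Submodule.orthogonalProjectionOnto W).toLinearMap.comp (S.comp W.subtype))
    (lam1 lam2 : ℝ)
    (h1 : Module.End.HasEigenvalue T1 lam1)
    (h1max : ∀ μ : ℝ, Module.End.HasEigenvalue T1 μ → μ ≤ lam1)
    (h2 : Module.End.HasEigenvalue T2 lam2)
    (h2max : ∀ μ : ℝ, Module.End.HasEigenvalue T2 μ → μ ≤ lam2) :
    lam1 < lam2 := by
  classical
  obtain ⟨v, hv⟩ := h1.exists_hasEigenvector
  have hv0 : (v : E) ≠ 0 := fun h => hv.right (Subtype.coe_injective (by simpa using h))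
  have hvV : (v : E) ∈ V := v.2
  have hT1v : (Submodule.orthogonalProjectionOnto V (S (v : E)) : E) = lam1 • (v : E) := by
    have := hv.apply_eq_smul
    rw [hT1] at this
    have := congrArg (Subtype.val) this
    simpa using this
  set u : E := S (v : E) - lam1 • (v : E) with hu_def
  have huV : u ∈ Vᗮ := by
    have := Submodule.sub_starProjection_mem_orthogonal (K := V) (S (v : E))
    rwa [Submodule.starProjection_apply, hT1v] at this
  have huW : u ∈ W :=
    Submodule.sub_mem W (hSV _ hvV) (Submodule.smul_mem W _ (hVW hvV))
  have hu0 : u ≠ 0 := by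
    intro h
    have : S (v : E) = lam1 • (v : E) := by
      have := sub_eq_zero.mp h
      simpa [hu_def] using this
    exact hdeg _ hvV hv0 (this ▸ Submodule.smul_mem V _ hvV)
  have huv : ⟪(v : E), u⟫ = 0 := (Submodule.mem_orthogonal _ _).mp huV _ hvV
  have hvu : ⟪u, (v : E)⟫ = 0 := by rw [real_inner_comm]; exact huv
  have hSveq : S (v : E) = lam1 • (v : E) + u := by simp [hu_def]
  have hSvu : ⟪S (v : E), u⟫ = ‖u‖ ^ 2 := by
    rw [hSveq, inner_add_left, real_inner_smul_left, huv, real_inner_self_eq_norm_sq]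
    ring
  have hSvv : ⟪S (v : E), (v : E)⟫ = lam1 * ‖(v : E)‖ ^ 2 := by
    rw [hSveq, inner_add_left, real_inner_smul_left, hvu, real_inner_self_eq_norm_sq]
    ring
  have huSv : ⟪S u, (v : E)⟫ = ‖u‖ ^ 2 := by
    rw [hsym u (v : E), real_inner_comm]
    exact hSvu
  set a : ℝ := ⟪S u, u⟫ - lam1 * ‖u‖ ^ 2 with ha_def
  set t : ℝ := ‖u‖ ^ 2 / (|a| + 1) with ht_def
  have hunorm : (0 : ℝ) < ‖u‖ ^ 2 := pow_pos (norm_pos_iff.mpr hu0) 2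
  have hvnorm : (0 : ℝ) < ‖(v : E)‖ ^ 2 := pow_pos (norm_pos_iff.mpr hv0) 2
  have ht : 0 < t := div_pos hunorm (by positivity)
  have hta : t * |a| < ‖u‖ ^ 2 := by
    rw [ht_def, div_mul_eq_mul_div, div_lt_iff₀ (by positivity)]
    nlinarith [abs_nonneg a, hunorm]
  have hdelta : 0 < 2 * t * ‖u‖ ^ 2 + t ^ 2 * a := by
    have h1' : t ^ 2 * a ≥ -(t * (t * |a|)) := by
      have := neg_abs_le a
      nlinarith [sq_nonneg t, ht.le]
    nlinarith [ht, hunorm]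
  set x : E := (v : E) + t • u with hx_def
  have hxW : x ∈ W := Submodule.add_mem W (hVW hvV) (Submodule.smul_mem W _ huW)
  have hxnorm : ‖x‖ ^ 2 = ‖(v : E)‖ ^ 2 + t ^ 2 * ‖u‖ ^ 2 := by
    rw [hx_def, norm_add_sq_real, real_inner_smul_right, huv, norm_smul, mul_pow, Real.norm_eq_abs, sq_abs]
    ring
  have hxnormpos : (0 : ℝ) < ‖x‖ ^ 2 := by
    rw [hxnorm]
    nlinarith [sq_nonneg t, hunorm]
  have hx0 : x ≠ 0 := by
    intro h
    rw [h] at hxnormpos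
    simp at hxnormpos
  have hSxx : ⟪S x, x⟫ = lam1 * ‖x‖ ^ 2 + (2 * t * ‖u‖ ^ 2 + t ^ 2 * a) := by
    rw [hx_def, map_add, map_smul, inner_add_left, inner_add_right, inner_add_right,
      real_inner_smul_right, real_inner_smul_left, real_inner_smul_left,
      real_inner_smul_right, hSvv, hSvu, huSv, hxnorm, ha_def]
    ring
  have hRx : lam1 * ‖x‖ ^ 2 < ⟪S x, x⟫ := by rw [hSxx]; linarith
  -- T2 as a continuous self-adjoint operator on W
  have hT2sym : T2.IsSymmetric := by
    intro p q
    rw [hT2]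
    simp only [LinearMap.comp_apply, ContinuousLinearMap.coe_coe, LinearMap.coe_comp,
      Function.comp_apply, Submodule.subtype_apply]
    rw [Submodule.inner_orthogonalProjectionOnto_eq_of_mem_right, Submodule.inner_orthogonalProjectionOnto_eq_of_mem_left]
    exact hsym _ _
  haveI : CompleteSpace W := FiniteDimensional.complete ℝ W
  set T2c : W →L[ℝ] W := LinearMap.toContinuousLinearMap T2 with hT2c
  have hT2ccoe : (T2c : W →ₗ[ℝ] W) = T2 := LinearMap.coe_toContinuousLinearMap T2
  have hT2csa : IsSelfAdjoint T2c := by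
    rw [ContinuousLinearMap.isSelfAdjoint_iff_isSymmetric, hT2ccoe]
    exact hT2sym
  set xW : W := ⟨x, hxW⟩ with hxW_def
  have hxW0 : xW ≠ 0 := fun h => hx0 (by simpa [hxW_def] using congrArg Subtype.val h)
  have hxWnorm : ‖xW‖ = ‖x‖ := rfl
  have hT2x : ⟪T2 xW, xW⟫ = ⟪S x, x⟫ := by
    rw [hT2]
    simp only [LinearMap.comp_apply, ContinuousLinearMap.coe_coe, LinearMap.coe_comp,
      Function.comp_apply, Submodule.subtype_apply]
    exact Submodule.inner_orthogonalProjectionOnto_eq_of_mem_right (𝕜 := ℝ) (K := W) xW (S (xW : E))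
  haveI : ProperSpace W := FiniteDimensional.proper ℝ W
  have hcs : IsCompact (Metric.sphere (0 : W) ‖xW‖) := isCompact_sphere _ _
  have hne : (Metric.sphere (0 : W) ‖xW‖).Nonempty := ⟨xW, by simp⟩
  obtain ⟨x₀, hx₀mem, hx₀max⟩ :=
    hcs.exists_isMaxOn hne T2c.reApplyInnerSelf_continuous.continuousOn
  have hx₀norm : ‖x₀‖ = ‖xW‖ := by simpa using hx₀mem
  have hx₀0 : x₀ ≠ 0 := by
    intro h
    rw [h] at hx₀norm
    simp only [norm_zero] at hx₀norm
    exact hxW0 (norm_eq_zero.mp hx₀norm.symm)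
  have hx₀max' : IsMaxOn T2c.reApplyInnerSelf (Metric.sphere (0 : W) ‖x₀‖) x₀ := by
    rwa [hx₀norm]
  have hev := hT2csa.hasEigenvector_of_isLocalExtrOn hx₀0 (Or.inr hx₀max'.localize)
  rw [hT2ccoe] at hev
  have hle : T2c.rayleighQuotient x₀ ≤ lam2 :=
    h2max _ (Module.End.hasEigenvalue_of_hasEigenvector hev)
  have hxWnormpos : (0 : ℝ) < ‖xW‖ ^ 2 := by rw [hxWnorm]; exact hxnormpos
  have hRxW : T2c.rayleighQuotient xW ≤ T2c.rayleighQuotient x₀ := by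
    have h := hx₀max (by simp : xW ∈ Metric.sphere (0 : W) ‖xW‖)
    simp only [ContinuousLinearMap.rayleighQuotient]
    rw [hx₀norm]
    exact div_le_div_of_nonneg_right h hxWnormpos.le
  have hRxW_val : T2c.rayleighQuotient xW = ⟪S x, x⟫ / ‖x‖ ^ 2 := by
    simp only [ContinuousLinearMap.rayleighQuotient,
      ContinuousLinearMap.reApplyInnerSelf_apply]
    have hco : T2c xW = T2 xW := congrFun (LinearMap.coe_toContinuousLinearMap' T2) xW
    rw [hco]
    have hre : RCLike.re (⟪T2 xW, xW⟫ : ℝ) = ⟪S x, x⟫ := by simpa using hT2x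
    rw [hre, hxWnorm]
  have hfin : lam1 < T2c.rayleighQuotient xW := by
    rw [hRxW_val, lt_div_iff₀ hxnormpos]
    linarith [hRx]
  linarith
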